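/- Let D and D' be independent diagonal random n×n matrices with i.i.d. diagonal entries distributed Bernoulli(p), and let A be a fixed n×n matrix. Then for every η with 0 < η ≤ 1/‖A‖², E exp(η ‖D A D'‖_F²) ≤ exp(2 p η ‖A‖_F²). -/

import Mathlib

open MeasureTheory ProbabilityTheory

/-- Frobenius norm squared of a matrix. -/
noncomputable def frobSq {m n : ℕ} (A : Matrix (Fin m) (Fin n) ℝ) : ℝ :=
  ∑ i, ∑ j, A i j ^ 2

/-- The ℓ²→ℓ² operator norm of a matrix. -/
noncomputable def opNorm {m n : ℕ} (A : Matrix (Fin m) (Fin n) ℝ) : ℝ :=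
  sSup {r : ℝ | ∃ x : Fin n → ℝ, (∑ j, x j ^ 2) ≤ 1 ∧
    r = Real.sqrt (∑ i, (∑ j, A i j * x j) ^ 2)}

/-! ### Auxiliary lemmas -/

lemma opNorm_bddAbove {m n : ℕ} (A : Matrix (Fin m) (Fin n) ℝ) :
    BddAbove {r : ℝ | ∃ x : Fin n → ℝ, (∑ j, x j ^ 2) ≤ 1 ∧
      r = Real.sqrt (∑ i, (∑ j, A i j * x j) ^ 2)} := by
  refine ⟨Real.sqrt (frobSq A), ?_⟩
  rintro r ⟨x, hx, rfl⟩
  apply Real.sqrt_le_sqrt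
  calc ∑ i, (∑ j, A i j * x j) ^ 2
      ≤ ∑ i, (∑ j, A i j ^ 2) * (∑ j, x j ^ 2) :=
        Finset.sum_le_sum fun i _ => Finset.sum_mul_sq_le_sq_mul_sq _ (A i) x
    _ ≤ ∑ i, (∑ j, A i j ^ 2) * 1 :=
        Finset.sum_le_sum fun i _ => mul_le_mul_of_nonneg_left hx (by positivity)
    _ = frobSq A := by simp [frobSq]

lemma zero_mem_opNorm_set {m n : ℕ} (A : Matrix (Fin m) (Fin n) ℝ) :
    (0 : ℝ) ∈ {r : ℝ | ∃ x : Fin n → ℝ, (∑ j, x j ^ 2) ≤ 1 ∧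
      r = Real.sqrt (∑ i, (∑ j, A i j * x j) ^ 2)} :=
  ⟨0, by simp, by simp⟩

lemma opNorm_nonneg {m n : ℕ} (A : Matrix (Fin m) (Fin n) ℝ) : 0 ≤ opNorm A :=
  le_csSup (opNorm_bddAbove A) (zero_mem_opNorm_set A)

lemma row_sq_le_opNorm_sq {m n : ℕ} (A : Matrix (Fin m) (Fin n) ℝ) (i : Fin m) :
    ∑ j, A i j ^ 2 ≤ opNorm A ^ 2 := by
  set r := ∑ j, A i j ^ 2 with hr
  have hr0 : 0 ≤ r := by positivity
  rcases eq_or_lt_of_le hr0 with hzero | hrpos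
  · rw [← hzero]; positivity
  · set s := Real.sqrt r with hs
    have hspos : 0 < s := Real.sqrt_pos.mpr hrpos
    have hs2 : s ^ 2 = r := Real.sq_sqrt hr0
    have hx1 : ∑ j, (A i j / s) ^ 2 ≤ 1 := by
      have h : ∑ j, (A i j / s) ^ 2 = r / r := by
        simp_rw [div_pow, hs2]
        rw [← Finset.sum_div]
      rw [h, div_self hrpos.ne']
    have hrow : ∑ j, A i j * (A i j / s) = s := by
      have h : ∀ j, A i j * (A i j / s) = A i j ^ 2 / s := fun j => by ring
      simp_rw [h]
      rw [← Finset.sum_div, ← hr, div_eq_iff hspos.ne', Real.mul_self_sqrt hr0]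
    have hmem : s ≤ opNorm A := by
      have h3 : s ^ 2 ≤ ∑ k, (∑ j, A k j * (A i j / s)) ^ 2 := by
        calc s ^ 2 = (∑ j, A i j * (A i j / s)) ^ 2 := by rw [hrow]
          _ ≤ _ := Finset.single_le_sum
              (f := fun k => (∑ j, A k j * (A i j / s)) ^ 2)
              (fun k _ => sq_nonneg _) (Finset.mem_univ i)
      have h4 : s ≤ Real.sqrt (∑ k, (∑ j, A k j * (A i j / s)) ^ 2) := by
        have := Real.sqrt_le_sqrt h3
        rwa [Real.sqrt_sq hspos.le] at this
      exact h4.trans (le_csSup (opNorm_bddAbove A) ⟨_, hx1, rfl⟩)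
    calc r = s ^ 2 := hs2.symm
      _ ≤ opNorm A ^ 2 := pow_le_pow_left₀ hspos.le hmem 2

lemma bern_key_real {p t : ℝ} (hp0 : 0 ≤ p) (ht0 : 0 ≤ t) (ht1 : t ≤ 1) :
    Real.exp t * p + (1 - p) ≤ Real.exp (2 * p * t) := by
  have h1 : Real.exp t - 1 ≤ 2 * t := by
    have hb := Real.exp_bound (x := t) (by rwa [abs_of_nonneg ht0]) (n := 1) one_pos
    simp only [Finset.range_one, Finset.sum_singleton, pow_zero, Nat.factorial_zero,
      Nat.cast_one, abs_of_nonneg ht0, pow_one] at hb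
    have := (abs_le.mp hb).2
    norm_num at this ⊢
    linarith
  have h2 : 2 * p * t + 1 ≤ Real.exp (2 * p * t) := Real.add_one_le_exp _
  nlinarith

/-- Factorization of the lintegral of a product of independent `ℝ≥0∞`-valued functions. -/
lemma lintegral_prod_of_iIndepFun {Ω : Type*} [MeasurableSpace Ω] {μ : Measure Ω}
    [IsProbabilityMeasure μ] {ι : Type*} {F : ι → Ω → ENNReal}
    (hF : ∀ i, Measurable (F i))
    (hind : iIndepFun F μ) (s : Finset ι) :
    ∫⁻ ω, ∏ i ∈ s, F i ω ∂μ = ∏ i ∈ s, ∫⁻ ω, F i ω ∂μ := by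
  classical
  induction s using Finset.induction with
  | empty => simp
  | @insert a s ha ih =>
    have hindep : IndepFun (∏ j ∈ s, F j) (F a) μ :=
      hind.indepFun_finset_prod_of_notMem hF ha
    have hprodmeas : Measurable (∏ j ∈ s, F j) := by
      have h := Finset.measurable_prod s fun j (_ : j ∈ s) => hF j
      convert h using 1
      ext a
      simp
    calc ∫⁻ ω, ∏ i ∈ insert a s, F i ω ∂μ
        = ∫⁻ ω, ((∏ i ∈ s, F i) * F a) ω ∂μ := by
          refine lintegral_congr fun ω => ?_
          simp [Finset.prod_insert ha, mul_comm]
      _ = (∫⁻ ω, (∏ i ∈ s, F i) ω ∂μ) * ∫⁻ ω, F a ω ∂μ :=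
          lintegral_mul_eq_lintegral_mul_lintegral_of_indepFun hprodmeas (hF a) hindep
      _ = (∫⁻ ω, ∏ i ∈ s, F i ω ∂μ) * ∫⁻ ω, F a ω ∂μ := by
          congr 1
          exact lintegral_congr fun ω => by simp
      _ = ∏ i ∈ insert a s, ∫⁻ ω, F i ω ∂μ := by
          rw [Finset.prod_insert ha, ih, mul_comm]

/-- MGF bound for a single Bernoulli variable. -/
lemma lintegral_exp_bernoulli {Ω : Type*} [MeasurableSpace Ω] (μ : Measure Ω)
    [IsProbabilityMeasure μ] (X : Ω → ℝ) (hX : Measurable X) (p : ℝ) (hp0 : 0 ≤ p) (hp1 : p ≤ 1)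
    (h1 : μ {ω | X ω = 1} = ENNReal.ofReal p) (h0 : μ {ω | X ω = 0} = 1 - ENNReal.ofReal p)
    (t : ℝ) (ht0 : 0 ≤ t) (ht1 : t ≤ 1) :
    ∫⁻ ω, ENNReal.ofReal (Real.exp (t * X ω)) ∂μ ≤ ENNReal.ofReal (Real.exp (2 * p * t)) := by
  set S1 : Set Ω := {ω | X ω = 1} with hS1
  set S0 : Set Ω := {ω | X ω = 0} with hS0
  have hmS1 : MeasurableSet S1 := hX (measurableSet_singleton 1)
  have hmS0 : MeasurableSet S0 := hX (measurableSet_singleton 0)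
  have hple : ENNReal.ofReal p ≤ 1 := by
    rw [← ENNReal.ofReal_one]; exact ENNReal.ofReal_le_ofReal hp1
  have hdisj : Disjoint S0 S1 := by
    rw [Set.disjoint_left]
    intro ω h₀ h₁
    simp only [hS0, hS1, Set.mem_setOf_eq] at h₀ h₁
    rw [h₀] at h₁; norm_num at h₁
  have hunion : μ (S0 ∪ S1) = 1 := by
    rw [measure_union hdisj hmS1, h0, h1, tsub_add_cancel_of_le hple]
  have hcompl : μ ((S0 ∪ S1)ᶜ) = 0 := by
    rw [measure_compl (hmS0.union hmS1) (measure_ne_top μ _), hunion, measure_univ, tsub_self]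
  set f : Ω → ENNReal := fun ω => ENNReal.ofReal (Real.exp (t * X ω)) with hf
  have key : ∫⁻ ω, f ω ∂μ =
      ENNReal.ofReal (Real.exp t) * ENNReal.ofReal p + (1 - ENNReal.ofReal p) := by
    rw [← lintegral_add_compl f (hmS0.union hmS1)]
    have hz : ∫⁻ ω in (S0 ∪ S1)ᶜ, f ω ∂μ = 0 := by
      apply setLIntegral_measure_zero _ _ hcompl
    rw [hz, add_zero, lintegral_union hmS1 hdisj]
    have e0 : ∫⁻ ω in S0, f ω ∂μ = 1 - ENNReal.ofReal p := by
      rw [setLIntegral_congr_fun hmS0 (g := fun _ => (1 : ENNReal))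
        (fun ω hω => by
          simp only [hf]
          rw [show X ω = 0 from hω]
          simp), setLIntegral_const, one_mul, h0]
    have e1 : ∫⁻ ω in S1, f ω ∂μ = ENNReal.ofReal (Real.exp t) * ENNReal.ofReal p := by
      rw [setLIntegral_congr_fun hmS1 (g := fun _ => ENNReal.ofReal (Real.exp t))
        (fun ω hω => by
          simp only [hf]
          rw [show X ω = 1 from hω]
          simp), setLIntegral_const, h1]
    rw [e0, e1, add_comm]
  rw [key]
  have h1p : (1 : ENNReal) - ENNReal.ofReal p = ENNReal.ofReal (1 - p) := by
    rw [ENNReal.ofReal_sub 1 hp0, ENNReal.ofReal_one]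
  rw [h1p, ← ENNReal.ofReal_mul (Real.exp_pos t).le, ← ENNReal.ofReal_add
    (by positivity) (by linarith)]
  exact ENNReal.ofReal_le_ofReal (bern_key_real hp0 ht0 ht1)

theorem mgf_frobenius_bernoulli_mask {Ω : Type*} [MeasurableSpace Ω] (μ : Measure Ω)
    [IsProbabilityMeasure μ] (n : ℕ) (A : Matrix (Fin n) (Fin n) ℝ) (p : ℝ)
    (hp0 : 0 ≤ p) (hp1 : p ≤ 1) (d d' : Fin n → Ω → ℝ)
    (hd : ∀ i, Measurable (d i)) (hd' : ∀ i, Measurable (d' i))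
    (hind : iIndepFun (Sum.elim d d') μ)
    (hd1 : ∀ i, μ {ω | d i ω = 1} = ENNReal.ofReal p)
    (hd0 : ∀ i, μ {ω | d i ω = 0} = 1 - ENNReal.ofReal p)
    (hd'1 : ∀ i, μ {ω | d' i ω = 1} = ENNReal.ofReal p)
    (hd'0 : ∀ i, μ {ω | d' i ω = 0} = 1 - ENNReal.ofReal p)
    (η : ℝ) (hη0 : 0 < η) (hη1 : η ≤ 1 / opNorm A ^ 2) :
    (∫⁻ ω, ENNReal.ofReal (Real.exp (η * ∑ i, ∑ j, (d i ω * A i j * d' j ω) ^ 2)) ∂μ) ≤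
      ENNReal.ofReal (Real.exp (2 * p * η * frobSq A)) := by
  classical
  -- operator norm is positive
  have hop0 : 0 ≤ opNorm A := opNorm_nonneg A
  have hop : 0 < opNorm A := by
    rcases hop0.lt_or_eq with h | h
    · exact h
    · exfalso
      rw [← h] at hη1
      norm_num at hη1
      linarith
  set t : Fin n → ℝ := fun i => η * ∑ j, A i j ^ 2 with htdef
  have ht0 : ∀ i, 0 ≤ t i := fun i => by positivity
  have ht1 : ∀ i, t i ≤ 1 := by
    intro i
    have h1 : t i ≤ η * opNorm A ^ 2 :=
      mul_le_mul_of_nonneg_left (row_sq_le_opNorm_sq A i) hη0.le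
    have h2 : η * opNorm A ^ 2 ≤ 1 := by
      rw [← le_div_iff₀ (by positivity)]
      exact hη1
    exact h1.trans h2
  -- a.e. the masks take values in {0,1}
  have hae : ∀ᵐ ω ∂μ, (∀ i, d i ω = 0 ∨ d i ω = 1) ∧ ∀ j, d' j ω = 0 ∨ d' j ω = 1 := by
    have hone : ∀ (X : Ω → ℝ), Measurable X → μ {ω | X ω = 1} = ENNReal.ofReal p →
        μ {ω | X ω = 0} = 1 - ENNReal.ofReal p → ∀ᵐ ω ∂μ, X ω = 0 ∨ X ω = 1 := by
      intro X hX h1 h0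
      have hm0 : MeasurableSet {ω | X ω = 0} := hX (measurableSet_singleton 0)
      have hm1 : MeasurableSet {ω | X ω = 1} := hX (measurableSet_singleton 1)
      have hple : ENNReal.ofReal p ≤ 1 := by
        rw [← ENNReal.ofReal_one]; exact ENNReal.ofReal_le_ofReal hp1
      have hu : μ ({ω | X ω = 0} ∪ {ω | X ω = 1}) = 1 := by
        rw [measure_union ?_ hm1, h0, h1, tsub_add_cancel_of_le hple]
        rw [Set.disjoint_left]
        intro ω hω0 hω1
        simp only [Set.mem_setOf_eq] at hω0 hω1
        rw [hω0] at hω1; norm_num at hω1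
      rw [ae_iff]
      have : {ω | ¬(X ω = 0 ∨ X ω = 1)} = ({ω | X ω = 0} ∪ {ω | X ω = 1})ᶜ := by
        ext ω; simp [not_or]
      rw [this, measure_compl (hm0.union hm1) (measure_ne_top μ _), hu, measure_univ, tsub_self]
    rw [Filter.eventually_and]
    constructor <;> rw [MeasureTheory.ae_all_iff]
    · exact fun i => hone (d i) (hd i) (hd1 i) (hd0 i)
    · exact fun j => hone (d' j) (hd' j) (hd'1 j) (hd'0 j)
  -- pointwise bound by a product
  set g : Fin n → ℝ → ENNReal := fun i x => ENNReal.ofReal (Real.exp (t i * x)) with hgdef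
  have hgmeas : ∀ i, Measurable (g i) := fun i =>
    ENNReal.measurable_ofReal.comp (Real.measurable_exp.comp (measurable_id.const_mul (t i)))
  have hpt : ∀ᵐ ω ∂μ,
      ENNReal.ofReal (Real.exp (η * ∑ i, ∑ j, (d i ω * A i j * d' j ω) ^ 2)) ≤
        ∏ i, g i (d i ω) := by
    filter_upwards [hae] with ω hω
    obtain ⟨hωd, hωd'⟩ := hω
    have hterm : ∀ x y a : ℝ, (x = 0 ∨ x = 1) → (y = 0 ∨ y = 1) →
        (x * a * y) ^ 2 ≤ x * a ^ 2 := by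
      rintro x y a (rfl | rfl) (rfl | rfl) <;> simp [sq_nonneg]
    have hsum : η * ∑ i, ∑ j, (d i ω * A i j * d' j ω) ^ 2 ≤ ∑ i, t i * d i ω := by
      have hrow : ∀ i, ∑ j, (d i ω * A i j * d' j ω) ^ 2 ≤ d i ω * ∑ j, A i j ^ 2 := by
        intro i
        rw [Finset.mul_sum]
        exact Finset.sum_le_sum fun j _ => hterm _ _ _ (hωd i) (hωd' j)
      calc η * ∑ i, ∑ j, (d i ω * A i j * d' j ω) ^ 2
          ≤ η * ∑ i, d i ω * ∑ j, A i j ^ 2 :=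
            mul_le_mul_of_nonneg_left (Finset.sum_le_sum fun i _ => hrow i) hη0.le
        _ = ∑ i, t i * d i ω := by
            rw [Finset.mul_sum]
            exact Finset.sum_congr rfl fun i _ => by rw [htdef]; ring
    calc ENNReal.ofReal (Real.exp (η * ∑ i, ∑ j, (d i ω * A i j * d' j ω) ^ 2))
        ≤ ENNReal.ofReal (Real.exp (∑ i, t i * d i ω)) :=
          ENNReal.ofReal_le_ofReal (Real.exp_le_exp.mpr hsum)
      _ = ENNReal.ofReal (∏ i, Real.exp (t i * d i ω)) := by rw [Real.exp_sum]
      _ = ∏ i, g i (d i ω) := ENNReal.ofReal_prod_of_nonneg fun i _ => (Real.exp_pos _).le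
  -- independence of the d-family
  have hdind : iIndepFun d μ := by
    rw [iIndepFun_iff_measure_inter_preimage_eq_mul]
    intro S sets hsets
    have h := hind.measure_inter_preimage_eq_mul
      (S.map ⟨Sum.inl, Sum.inl_injective⟩)
      (sets := Sum.elim sets (fun _ => Set.univ))
      (fun k hk => by
        rcases Finset.mem_map.mp hk with ⟨i, hi, rfl⟩
        exact hsets i hi)
    have hInter : (⋂ k ∈ S.map ⟨Sum.inl, Sum.inl_injective⟩,
        Sum.elim d d' k ⁻¹' Sum.elim sets (fun _ => Set.univ) k) =
        ⋂ i ∈ S, d i ⁻¹' sets i := by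
      ext ω
      simp [Finset.mem_map]
    rw [hInter, Finset.prod_map] at h
    exact h
  have hFind : iIndepFun
      (fun i => g i ∘ d i) μ := hdind.comp g hgmeas
  have hFmeas : ∀ i, Measurable (fun ω => g i (d i ω)) := fun i => (hgmeas i).comp (hd i)
  -- put everything together
  calc (∫⁻ ω, ENNReal.ofReal (Real.exp (η * ∑ i, ∑ j, (d i ω * A i j * d' j ω) ^ 2)) ∂μ)
      ≤ ∫⁻ ω, ∏ i, g i (d i ω) ∂μ := lintegral_mono_ae hpt
    _ = ∏ i, ∫⁻ ω, g i (d i ω) ∂μ :=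
        lintegral_prod_of_iIndepFun (F := fun i => g i ∘ d i) hFmeas hFind Finset.univ
    _ ≤ ∏ i, ENNReal.ofReal (Real.exp (2 * p * t i)) := by
        refine Finset.prod_le_prod' fun i _ => ?_
        exact lintegral_exp_bernoulli μ (d i) (hd i) p hp0 hp1 (hd1 i) (hd0 i)
          (t i) (ht0 i) (ht1 i)
    _ = ENNReal.ofReal (∏ i, Real.exp (2 * p * t i)) :=
        (ENNReal.ofReal_prod_of_nonneg fun i _ => (Real.exp_pos _).le).symm
    _ = ENNReal.ofReal (Real.exp (2 * p * η * frobSq A)) := by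
        have hsum : ∑ i, 2 * p * t i = 2 * p * η * frobSq A := by
          simp only [htdef, frobSq, Finset.mul_sum]
          exact Finset.sum_congr rfl fun i _ => Finset.sum_congr rfl fun j _ => by ring
        rw [← Real.exp_sum, hsum]
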